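/- Let R be a commutative ring and f ∈ R((t)) an invertible Laurent series. Then the function on Spec R sending a prime p to the order of the image of f in κ(p)((t)) is locally constant; in particular if Spec R is connected, all residual orders of f are equal. -/

import Mathlib

open HahnSeries

/-- The residue field `κ(p)` at a prime `p` of `R`. -/
abbrev ResidueFieldAt {R : Type*} [CommRing R] (p : PrimeSpectrum R) : Type _ :=
  FractionRing (R ⧸ p.asIdeal)

/-- The canonical ring homomorphism `R → κ(p)`. -/
noncomputable def toResidueFieldAt {R : Type*} [CommRing R] (p : PrimeSpectrum R) :
    R →+* ResidueFieldAt p :=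
  (algebraMap (R ⧸ p.asIdeal) (FractionRing (R ⧸ p.asIdeal))).comp
    (Ideal.Quotient.mk p.asIdeal)

lemma toResidueFieldAt_eq_zero_iff {R : Type*} [CommRing R] (p : PrimeSpectrum R) (x : R) :
    toResidueFieldAt p x = 0 ↔ x ∈ p.asIdeal := by
  rw [toResidueFieldAt, RingHom.comp_apply]
  rw [IsFractionRing.to_map_eq_zero_iff (K := FractionRing (R ⧸ p.asIdeal)),
    Ideal.Quotient.eq_zero_iff_mem]

lemma map_mul_residue {R : Type*} [CommRing R] (p : PrimeSpectrum R)
    (f g : LaurentSeries R) :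
    (HahnSeries.map (f * g) (toResidueFieldAt p) : LaurentSeries (ResidueFieldAt p)) =
      HahnSeries.map f (toResidueFieldAt p) * HahnSeries.map g (toResidueFieldAt p) :=
  HahnSeries.map_mul (toResidueFieldAt p).toNonUnitalRingHom

lemma map_one_residue {R : Type*} [CommRing R] (p : PrimeSpectrum R) :
    (HahnSeries.map (1 : LaurentSeries R) (toResidueFieldAt p) :
      LaurentSeries (ResidueFieldAt p)) = 1 :=
  HahnSeries.map_one (toResidueFieldAt p).toMonoidWithZeroHom

/-- For an invertible Laurent series `f ∈ R((t))`, the function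
`p ↦ ord(f mod p) ∈ ℤ` on `Spec R` (order of the image of `f` in `κ(p)((t))`) is
locally constant; in particular, if `Spec R` is connected, all residual orders of `f`
are equal. -/
theorem residual_order_locallyConstant {R : Type*} [CommRing R]
    (f : LaurentSeries R) (hf : IsUnit f) :
    IsLocallyConstant (fun p : PrimeSpectrum R =>
      (HahnSeries.map f (toResidueFieldAt p) : LaurentSeries (ResidueFieldAt p)).order) ∧
    (PreconnectedSpace (PrimeSpectrum R) →
      ∀ p q : PrimeSpectrum R,
        (HahnSeries.map f (toResidueFieldAt p) : LaurentSeries (ResidueFieldAt p)).order =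
        (HahnSeries.map f (toResidueFieldAt q) : LaurentSeries (ResidueFieldAt q)).order) := by
  obtain ⟨g, hg⟩ := hf.exists_right_inv
  have key : ∀ q : PrimeSpectrum R,
      (HahnSeries.map f (toResidueFieldAt q) : LaurentSeries (ResidueFieldAt q)) *
        HahnSeries.map g (toResidueFieldAt q) = 1 := by
    intro q
    rw [← map_mul_residue, hg, map_one_residue]
  have hfq : ∀ q, (HahnSeries.map f (toResidueFieldAt q) :
      LaurentSeries (ResidueFieldAt q)) ≠ 0 :=
    fun q => left_ne_zero_of_mul_eq_one (key q)
  have hgq : ∀ q, (HahnSeries.map g (toResidueFieldAt q) :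
      LaurentSeries (ResidueFieldAt q)) ≠ 0 :=
    fun q => right_ne_zero_of_mul_eq_one (key q)
  have hsum : ∀ q : PrimeSpectrum R,
      (HahnSeries.map f (toResidueFieldAt q) : LaurentSeries (ResidueFieldAt q)).order +
      (HahnSeries.map g (toResidueFieldAt q) : LaurentSeries (ResidueFieldAt q)).order = 0 := by
    intro q
    rw [← HahnSeries.order_mul (hfq q) (hgq q), key q, HahnSeries.order_one]
  have aux : ∀ (h : LaurentSeries R) (q : PrimeSpectrum R),
      (HahnSeries.map h (toResidueFieldAt q) : LaurentSeries (ResidueFieldAt q)) ≠ 0 →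
      ∀ n : ℤ,
      ((HahnSeries.map h (toResidueFieldAt q) : LaurentSeries (ResidueFieldAt q)).order ≤ n ↔
        ∃ m ≤ n, h.coeff m ∉ q.asIdeal) := by
    intro h q hh n
    constructor
    · intro hle
      refine ⟨_, hle, ?_⟩
      rw [← toResidueFieldAt_eq_zero_iff]
      simpa using HahnSeries.coeff_order_eq_zero.not.mpr hh
    · rintro ⟨m, hm, hmem⟩
      refine le_trans (HahnSeries.order_le_of_coeff_ne_zero ?_) hm
      simpa [toResidueFieldAt_eq_zero_iff] using hmem
  have hlc : IsLocallyConstant (fun p : PrimeSpectrum R =>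
      (HahnSeries.map f (toResidueFieldAt p) : LaurentSeries (ResidueFieldAt p)).order) := by
    rw [IsLocallyConstant.iff_isOpen_fiber]
    intro n
    have heq : (fun p : PrimeSpectrum R =>
        (HahnSeries.map f (toResidueFieldAt p) :
          LaurentSeries (ResidueFieldAt p)).order) ⁻¹' {n} =
        (⋃ m ∈ Set.Iic n, (PrimeSpectrum.basicOpen (f.coeff m) : Set (PrimeSpectrum R))) ∩
        (⋃ m ∈ Set.Iic (-n), (PrimeSpectrum.basicOpen (g.coeff m) : Set (PrimeSpectrum R))) := by
      ext q
      simp only [Set.mem_preimage, Set.mem_singleton_iff, Set.mem_inter_iff, Set.mem_iUnion,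
        PrimeSpectrum.mem_basicOpen, Set.mem_Iic, SetLike.mem_coe, exists_prop]
      rw [← aux f q (hfq q) n, ← aux g q (hgq q) (-n)]
      have := hsum q
      omega
    rw [heq]
    exact ((isOpen_biUnion fun m _ => (PrimeSpectrum.basicOpen (f.coeff m)).isOpen).inter
      (isOpen_biUnion fun m _ => (PrimeSpectrum.basicOpen (g.coeff m)).isOpen))
  exact ⟨hlc, fun _ p q => hlc.apply_eq_of_preconnectedSpace p q⟩
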